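/- For non-negative integers m1,m2,n1,n2, the number of pairs (b,c) ∈ Z_+^2 with b ≤ 1, b+c ≤ min(m1+m2, n1+n2), and b+2c ≤ m1+n1 equals min(2(m1+m2), 2(n1+n2), m1+n1) + 1. -/
import Mathlib


/-- Counting identity for ³S^C: the number of (b,c) ∈ Z_+² with b ≤ 1,
b+c ≤ min(m1+m2, n1+n2) and b+2c ≤ m1+n1 is min(2(m1+m2), 2(n1+n2), m1+n1)+1. -/
theorem stmt_10 (m1 m2 n1 n2 : ℤ) (hm1 : 0 ≤ m1) (hm2 : 0 ≤ m2)
    (hn1 : 0 ≤ n1) (hn2 : 0 ≤ n2) :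
    (Set.ncard {p : ℤ × ℤ | 0 ≤ p.1 ∧ 0 ≤ p.2 ∧ p.1 ≤ 1 ∧
        p.1 + p.2 ≤ min (m1 + m2) (n1 + n2) ∧ p.1 + 2 * p.2 ≤ m1 + n1} : ℤ) =
      min (min (2 * (m1 + m2)) (2 * (n1 + n2))) (m1 + n1) + 1 := by
  set K : ℤ := min (min (2 * (m1 + m2)) (2 * (n1 + n2))) (m1 + n1) with hKdef
  have hK0 : 0 ≤ K := by simp only [hKdef, le_min_iff]; omega
  have hset : {p : ℤ × ℤ | 0 ≤ p.1 ∧ 0 ≤ p.2 ∧ p.1 ≤ 1 ∧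
        p.1 + p.2 ≤ min (m1 + m2) (n1 + n2) ∧ p.1 + 2 * p.2 ≤ m1 + n1}
      = (fun t : ℤ => (t % 2, t / 2)) '' Set.Icc 0 K := by
    ext p
    simp only [Set.mem_setOf_eq, Set.mem_image, Set.mem_Icc, le_min_iff, hKdef, min_le_iff]
    constructor
    · rintro ⟨h1, h2, h3, ⟨h4, h5⟩, h6⟩
      exact ⟨p.1 + 2 * p.2, by omega, by
        have : (p.1 + 2 * p.2) % 2 = p.1 ∧ (p.1 + 2 * p.2) / 2 = p.2 := by omega
        exact Prod.ext this.1 this.2⟩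
    · rintro ⟨t, ⟨ht0, ht1, ht2⟩, rfl⟩
      simp only
      omega
  rw [hset, Set.ncard_image_of_injOn (f := fun t : ℤ => (t % 2, t / 2))
    (by intro a _ b _ hab
        simp only [Prod.mk.injEq] at hab
        omega)]
  rw [← Finset.coe_Icc, Set.ncard_coe_finset, Int.card_Icc]
  omega
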